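/- For any matrix A ∈ Mat_n(ℤ) and S = Diag(1,…,n), the polynomial t ↦ disc_x det(xI − tS − A) has degree n² − n in t with leading coefficient equal to disc(χ_S) = ∏_{1 ≤ i < j ≤ n} (j − i)², which is nonzero; hence for each prime p > n this polynomial in t is not identically zero modulo p. -/

import Mathlib

open Polynomial

/-- The discriminant of a monic polynomial `f` over a field `K`, computed in an algebraic
closure as `(-1)^{n(n-1)/2} ∏ᵢ f'(rᵢ)` over the roots `rᵢ` of `f`. -/
noncomputable def polyDisc (K : Type*) [Field K] (f : K[X]) : AlgebraicClosure K :=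
  (-1) ^ (f.natDegree * (f.natDegree - 1) / 2) *
    ((f.aroots (AlgebraicClosure K)).map
      (fun r => (derivative (f.map (algebraMap K (AlgebraicClosure K)))).eval r)).prod

set_option synthInstance.maxHeartbeats 1000000
set_option maxHeartbeats 1600000

namespace Stmt13

open Matrix

variable {n : ℕ} {R S : Type*} [CommRing R] [CommRing S]

noncomputable def dd (B : Matrix (Fin n) (Fin n) R) : R :=
  (Polynomial.aeval B (derivative B.charpoly)).det

lemma aeval_matrix_map (f : R →+* S) (B : Matrix (Fin n) (Fin n) R) (p : R[X]) :
    (Polynomial.aeval B p).map f = Polynomial.aeval (B.map f) (p.map f) := by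
  have h : (f.mapMatrix).comp (algebraMap R (Matrix (Fin n) (Fin n) R))
      = (algebraMap S (Matrix (Fin n) (Fin n) S)).comp f := by
    ext r
    simp [Matrix.algebraMap_eq_diagonal, Pi.algebraMap_def, Matrix.diagonal_apply, apply_ite f]
  calc (Polynomial.aeval B p).map f = f.mapMatrix (Polynomial.aeval B p) := rfl
    _ = _ := by
        rw [Polynomial.aeval_def, Polynomial.hom_eval₂, h, Polynomial.aeval_def,
          Polynomial.eval₂_map, RingHom.mapMatrix_apply]

lemma dd_map (f : R →+* S) (B : Matrix (Fin n) (Fin n) R) :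
    f (dd B) = dd (B.map f) := by
  unfold dd
  rw [RingHom.map_det, RingHom.mapMatrix_apply, aeval_matrix_map, ← Polynomial.derivative_map,
    ← Matrix.charpoly_map]

lemma eval_charpoly (B : Matrix (Fin n) (Fin n) R) (x : R) :
    B.charpoly.eval x = (x • (1 : Matrix (Fin n) (Fin n) R) - B).det := by
  rw [Matrix.charpoly, ← Polynomial.coe_evalRingHom, RingHom.map_det]
  congr 1
  ext i j
  by_cases h : i = j
  · subst h
    simp [Matrix.charmatrix_apply_eq, Matrix.sub_apply, Matrix.one_apply_eq]
  · simp [Matrix.charmatrix_apply_ne _ _ _ h, Matrix.sub_apply, Matrix.one_apply_ne h]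

section AlgClosed

variable {K : Type*} [Field K] [IsAlgClosed K]

lemma roots_card (B : Matrix (Fin n) (Fin n) K) : B.charpoly.roots.card = n := by
  rw [splits_iff_card_roots.mp (IsAlgClosed.splits _),
    Matrix.charpoly_natDegree_eq_dim, Fintype.card_fin]

lemma charpoly_eq (B : Matrix (Fin n) (Fin n) K) :
    B.charpoly = (B.charpoly.roots.map fun a => X - C a).prod :=
  (prod_multiset_X_sub_C_of_monic_of_roots_card_eq (Matrix.charpoly_monic B)
    (by rw [roots_card B, Matrix.charpoly_natDegree_eq_dim, Fintype.card_fin])).symm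

lemma det_aeval_eq (B : Matrix (Fin n) (Fin n) K) (g : K[X]) :
    (Polynomial.aeval B g).det = (B.charpoly.roots.map fun r => g.eval r).prod := by
  have hcard := roots_card B
  have base : ∀ c : K, (Polynomial.aeval B (C c)).det
      = (B.charpoly.roots.map fun r => (C c).eval r).prod := by
    intro c
    rw [Polynomial.aeval_C]
    simp only [eval_C]
    rw [Multiset.map_const', Multiset.prod_replicate, hcard,
      Algebra.algebraMap_eq_smul_one, Matrix.det_smul, Matrix.det_one, mul_one, Fintype.card_fin]
  suffices h : ∀ (N : ℕ) (g : K[X]), g.natDegree ≤ N →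
      (Polynomial.aeval B g).det = (B.charpoly.roots.map fun r => g.eval r).prod from
    h _ g le_rfl
  intro N
  induction N with
  | zero =>
    intro g hg
    rw [eq_C_of_natDegree_eq_zero (Nat.le_zero.mp hg)]
    exact base _
  | succ N ih =>
    intro g hg
    by_cases h0 : g.natDegree = 0
    · rw [eq_C_of_natDegree_eq_zero h0]
      exact base _
    · have hg0 : g ≠ 0 := fun h => h0 (by simp [h])
      have hdeg : g.degree ≠ 0 := fun h => h0 (natDegree_eq_zero_iff_degree_le_zero.mpr h.le)
      obtain ⟨s, hs⟩ := IsAlgClosed.exists_root g hdeg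
      obtain ⟨g1, rfl⟩ := Polynomial.dvd_iff_isRoot.mpr hs
      have hg1 : g1 ≠ 0 := right_ne_zero_of_mul hg0
      have hdeg1 : g1.natDegree ≤ N := by
        have h2 := Polynomial.natDegree_mul (X_sub_C_ne_zero s) hg1
        rw [Polynomial.natDegree_X_sub_C] at h2
        omega
      have hfac : (Polynomial.aeval B (X - C s)).det
          = (B.charpoly.roots.map fun r => r - s).prod := by
        have h1 : Polynomial.aeval B (X - C s)
            = -(s • (1 : Matrix (Fin n) (Fin n) K) - B) := by
          rw [map_sub, Polynomial.aeval_X, Polynomial.aeval_C,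
            Algebra.algebraMap_eq_smul_one, neg_sub]
        rw [h1, Matrix.det_neg, ← eval_charpoly, Fintype.card_fin]
        conv_lhs => rw [charpoly_eq B]
        rw [Polynomial.eval_multiset_prod, Multiset.map_map]
        simp only [Function.comp_def, eval_sub, eval_X, eval_C]
        have h2 : (B.charpoly.roots.map fun r => r - s)
            = (B.charpoly.roots.map fun r => s - r).map Neg.neg := by
          rw [Multiset.map_map]; exact Multiset.map_congr rfl fun r _ => by simp
        rw [h2, Multiset.prod_map_neg, Multiset.card_map, hcard]
      rw [_root_.map_mul, Matrix.det_mul, hfac, ih g1 hdeg1, ← Multiset.prod_map_mul]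
      exact congrArg _ (Multiset.map_congr rfl fun r _ => by simp [eval_mul])

lemma dd_smul (c : K) (hc : c ≠ 0) (B : Matrix (Fin n) (Fin n) K) :
    dd (c • B) = c ^ (n * (n - 1)) * dd B := by
  classical
  have hcard := roots_card B
  have hB : B.charpoly = (B.charpoly.roots.map fun a => X - C a).prod := charpoly_eq B
  set m := B.charpoly.roots with hm
  have h1 : (c • B).charpoly = ((m.map fun r => c * r).map fun a => X - C a).prod := by
    apply Polynomial.funext
    intro x
    rw [eval_charpoly]
    have hmat : x • (1 : Matrix (Fin n) (Fin n) K) - c • B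
        = c • ((c⁻¹ * x) • (1 : Matrix (Fin n) (Fin n) K) - B) := by
      rw [smul_sub, smul_smul, mul_inv_cancel_left₀ hc]
    rw [hmat, Matrix.det_smul, Fintype.card_fin, ← eval_charpoly]
    conv_lhs => rw [hB]
    rw [Polynomial.eval_multiset_prod, Polynomial.eval_multiset_prod,
      Multiset.map_map, Multiset.map_map, Multiset.map_map]
    simp only [Function.comp_def, eval_sub, eval_X, eval_C]
    have h2 : (m.map fun r => x - c * r) = m.map fun r => c * (c⁻¹ * x - r) :=
      Multiset.map_congr rfl fun r _ => by field_simp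
    rw [h2, Multiset.prod_map_mul, Multiset.map_const', Multiset.prod_replicate, hcard]
  have hroots : (c • B).charpoly.roots = m.map fun r => c * r := by
    rw [h1, roots_multiset_prod_X_sub_C]
  unfold dd
  rw [det_aeval_eq, det_aeval_eq, hroots, Multiset.map_map]
  have key : ∀ r ∈ m, ((fun r => (derivative (c • B).charpoly).eval r) ∘ fun r => c * r) r
      = c ^ (n - 1) * (derivative B.charpoly).eval r := by
    intro r hr
    simp only [Function.comp_def]
    conv_lhs => rw [h1]
    conv_rhs => rw [hB]
    rw [eval_multiset_prod_X_sub_C_derivative (Multiset.mem_map_of_mem _ hr),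
      eval_multiset_prod_X_sub_C_derivative hr,
      ← Multiset.map_erase _ (mul_right_injective₀ hc) r m, Multiset.map_map]
    have h3 : ((m.erase r).map ((fun b => c * r - b) ∘ fun b => c * b))
        = (m.erase r).map fun b => c * (r - b) :=
      Multiset.map_congr rfl fun b _ => by simp [mul_sub]
    rw [h3, Multiset.prod_map_mul, Multiset.map_const', Multiset.prod_replicate,
      Multiset.card_erase_of_mem hr, hcard]
    rfl
  rw [Multiset.map_congr rfl key, Multiset.prod_map_mul, Multiset.map_const',
    Multiset.prod_replicate, hcard, ← pow_mul, Nat.mul_comm]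

end AlgClosed

lemma aeval_diagonal (v : Fin n → R) (p : R[X]) :
    Polynomial.aeval (Matrix.diagonal v) p = Matrix.diagonal fun i => p.eval (v i) := by
  induction p using Polynomial.induction_on' with
  | add p q hp hq =>
    rw [map_add, hp, hq, Matrix.diagonal_add]
    funext i
    simp
  | monomial k a =>
    rw [Polynomial.aeval_monomial, Matrix.diagonal_pow, Matrix.algebraMap_eq_diagonal,
      Matrix.diagonal_mul_diagonal]
    funext i
    simp [eval_monomial, Pi.algebraMap_def]

lemma charpoly_diagonal (v : Fin n → R) :
    (Matrix.diagonal v).charpoly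
      = (((Finset.univ : Finset (Fin n)).val.map v).map fun a => X - C a).prod := by
  rw [Matrix.charpoly]
  have h : charmatrix (Matrix.diagonal v) = Matrix.diagonal fun i => (X : R[X]) - C (v i) := by
    funext i j
    by_cases h : i = j
    · subst h
      rw [charmatrix_apply_eq]
      simp [Matrix.diagonal_apply_eq]
    · rw [charmatrix_apply_ne _ _ _ h, Matrix.diagonal_apply_ne _ h, Matrix.diagonal_apply_ne _ h,
        map_zero, neg_zero]
  rw [h, Matrix.det_diagonal, Multiset.map_map, Finset.prod_eq_multiset_prod]
  rfl

lemma dd_diagonal (v : Fin n → ℤ) (hv : Function.Injective v) :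
    dd (Matrix.diagonal v) = ∏ i, ∏ j ∈ Finset.univ.erase i, (v i - v j) := by
  classical
  unfold dd
  rw [charpoly_diagonal, aeval_diagonal, Matrix.det_diagonal]
  apply Finset.prod_congr rfl
  intro i _
  have hmem : v i ∈ (Finset.univ : Finset (Fin n)).val.map v :=
    Multiset.mem_map_of_mem v (Finset.mem_univ i)
  rw [eval_multiset_prod_X_sub_C_derivative hmem]
  have h : ((Finset.univ : Finset (Fin n)).val.map v).erase (v i)
      = (Finset.univ.erase i).val.map v := by
    rw [Finset.erase_val, Multiset.map_erase v hv]
  rw [h, Multiset.map_map, ← Finset.prod_eq_multiset_prod]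
  rfl

lemma prod_pairs (v : Fin n → ℤ) :
    (∏ i, ∏ j ∈ Finset.univ.erase i, (v i - v j))
      = (-1) ^ (n * (n - 1) / 2)
        * ∏ q ∈ Finset.univ.filter (fun q : Fin n × Fin n => q.1 < q.2), (v q.2 - v q.1) ^ 2 := by
  have hdisj : ∀ i : Fin n,
      Disjoint (Finset.univ.filter (· < i)) (Finset.univ.filter (i < ·)) := by
    intro i
    rw [Finset.disjoint_left]
    intro j h1 h2
    simp only [Finset.mem_filter, Finset.mem_univ, true_and] at h1 h2
    exact absurd h2 (not_lt_of_gt h1)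
  have hsplit : ∀ i : Fin n, Finset.univ.erase i
      = (Finset.univ.filter (· < i)) ∪ (Finset.univ.filter (i < ·)) := by
    intro i
    ext j
    simp only [Finset.mem_erase, Finset.mem_union, Finset.mem_filter, Finset.mem_univ, true_and,
      and_true]
    constructor
    · intro h; exact lt_or_gt_of_ne h
    · rintro (h | h)
      · exact ne_of_lt h
      · exact ne_of_gt h
  have hstep : ∀ i : Fin n, ∏ j ∈ Finset.univ.erase i, (v i - v j)
      = (∏ j ∈ Finset.univ.filter (· < i), (v i - v j))
        * ∏ j ∈ Finset.univ.filter (i < ·), (v i - v j) := fun i => by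
    rw [hsplit i, Finset.prod_union (hdisj i)]
  rw [Finset.prod_congr rfl fun i _ => hstep i, Finset.prod_mul_distrib]
  have h1 : (∏ i, ∏ j ∈ Finset.univ.filter (· < i), (v i - v j))
      = ∏ q ∈ Finset.univ.filter (fun q : Fin n × Fin n => q.2 < q.1), (v q.1 - v q.2) :=
    (Finset.prod_finset_product (Finset.univ.filter fun q : Fin n × Fin n => q.2 < q.1)
      Finset.univ (fun c => Finset.univ.filter (· < c)) (fun p => by simp)
      (f := fun q => v q.1 - v q.2)).symm
  have h2 : (∏ i, ∏ j ∈ Finset.univ.filter (i < ·), (v i - v j))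
      = ∏ q ∈ Finset.univ.filter (fun q : Fin n × Fin n => q.1 < q.2), (v q.1 - v q.2) :=
    (Finset.prod_finset_product (Finset.univ.filter fun q : Fin n × Fin n => q.1 < q.2)
      Finset.univ (fun c => Finset.univ.filter (c < ·)) (fun p => by simp)
      (f := fun q => v q.1 - v q.2)).symm
  have h3 : (∏ q ∈ Finset.univ.filter (fun q : Fin n × Fin n => q.2 < q.1), (v q.1 - v q.2))
      = ∏ q ∈ Finset.univ.filter (fun q : Fin n × Fin n => q.1 < q.2), (v q.2 - v q.1) := by
    apply Finset.prod_bij' (fun q _ => (q.2, q.1)) (fun q _ => (q.2, q.1)) <;> simp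
  have hcard : (Finset.univ.filter fun q : Fin n × Fin n => q.1 < q.2).card
      = n * (n - 1) / 2 := by
    rw [Finset.card_eq_sum_ones,
      Finset.sum_finset_product_right (Finset.univ.filter fun q : Fin n × Fin n => q.1 < q.2)
        Finset.univ (fun j => Finset.univ.filter (· < j)) (fun p => by simp)
        (f := fun _ => (1 : ℕ))]
    have hIio : ∀ j : Fin n, Finset.univ.filter (· < j) = Finset.Iio j := by
      intro j; ext k; simp
    simp only [hIio, Finset.sum_const, smul_eq_mul, mul_one, Fin.card_Iio]
    rw [show (∑ x : Fin n, (x : ℕ)) = ∑ i ∈ Finset.range n, i from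
      Fin.sum_univ_eq_sum_range (fun k => k) n, Finset.sum_range_id]
  rw [h1, h2, h3, ← Finset.prod_mul_distrib,
    Finset.prod_congr rfl (fun (q : Fin n × Fin n) _ =>
      show (v q.2 - v q.1) * (v q.1 - v q.2) = -1 * (v q.2 - v q.1) ^ 2 by ring),
    Finset.prod_mul_distrib, Finset.prod_const, hcard]


lemma nat_sq (n : ℕ) : n * (n - 1) = n ^ 2 - n := by
  cases n with
  | zero => rfl
  | succ k =>
    have h1 : (k + 1) * (k + 1) = (k + 1) * k + (k + 1) := by ring
    have h2 : (k + 1) ^ 2 = (k + 1) * (k + 1) := sq (k + 1)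
    simp only [Nat.add_sub_cancel]
    omega

/-- the algebraic closure of `ℚ(t)` -/
noncomputable abbrev KK : Type := AlgebraicClosure (FractionRing (Polynomial ℤ))

lemma key_reflect (Sd A : Matrix (Fin n) (Fin n) ℤ) :
    (X : ℤ[X]) ^ (dd (Sd.map Polynomial.C + (X : ℤ[X]) • A.map Polynomial.C)).natDegree
        * dd ((X : ℤ[X]) • Sd.map Polynomial.C + A.map Polynomial.C)
      = X ^ (n * (n - 1)) *
        Polynomial.reflect (dd (Sd.map Polynomial.C + (X : ℤ[X]) • A.map Polynomial.C)).natDegree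
          (dd (Sd.map Polynomial.C + (X : ℤ[X]) • A.map Polynomial.C)) := by
  set M : Matrix (Fin n) (Fin n) ℤ[X] :=
    (X : ℤ[X]) • Sd.map Polynomial.C + A.map Polynomial.C with hM
  set N₀ : Matrix (Fin n) (Fin n) ℤ[X] :=
    Sd.map Polynomial.C + (X : ℤ[X]) • A.map Polynomial.C with hN₀
  set E : ℤ[X] := dd N₀ with hE
  set i₀ : ℤ →+* KK := Int.castRingHom KK with hi₀
  set ψ : ℤ[X] →+* KK :=
    (algebraMap (FractionRing (Polynomial ℤ)) KK).comp
      (algebraMap ℤ[X] (FractionRing (Polynomial ℤ))) with hψ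
  have hψinj : Function.Injective ψ :=
    (algebraMap (FractionRing (Polynomial ℤ)) KK).injective.comp
      (IsFractionRing.injective ℤ[X] (FractionRing (Polynomial ℤ)))
  set τ : KK := ψ X with hτdef
  set φ : ℤ[X] →+* KK := Polynomial.eval₂RingHom i₀ τ with hφ
  set φi : ℤ[X] →+* KK := Polynomial.eval₂RingHom i₀ τ⁻¹ with hφi
  have hφcomp : φ = ψ :=
    Polynomial.ringHom_ext
      (fun a => RingHom.congr_fun (RingHom.ext_int (φ.comp Polynomial.C) (ψ.comp Polynomial.C)) a)
      (by simp [hφ, hτdef])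
  have hinj : Function.Injective φ := by rw [hφcomp]; exact hψinj
  have hτ : τ ≠ 0 := fun h => Polynomial.X_ne_zero (hψinj (h.trans (map_zero ψ).symm))
  have hMmap : M.map φ = τ • (Sd.map i₀ + τ⁻¹ • A.map i₀) := by
    ext i j
    simp only [hM, hφ, Matrix.map_apply, Matrix.add_apply, Matrix.smul_apply, smul_eq_mul,
      Polynomial.coe_eval₂RingHom, Polynomial.eval₂_add, Polynomial.eval₂_mul,
      Polynomial.eval₂_X, Polynomial.eval₂_C]
    rw [mul_add, ← mul_assoc, mul_inv_cancel₀ hτ, one_mul]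
  have hNmap : Sd.map i₀ + τ⁻¹ • A.map i₀ = N₀.map φi := by
    ext i j
    simp only [hN₀, hφi, Matrix.map_apply, Matrix.add_apply, Matrix.smul_apply, smul_eq_mul,
      Polynomial.coe_eval₂RingHom, Polynomial.eval₂_add, Polynomial.eval₂_mul,
      Polynomial.eval₂_X, Polynomial.eval₂_C]
  have hkey : φ (dd M) = τ ^ (n * (n - 1)) * φi E := by
    rw [dd_map φ M, hMmap, dd_smul τ hτ, hNmap, ← dd_map]
  letI : Invertible (τ⁻¹) := ⟨τ, mul_inv_cancel₀ hτ, inv_mul_cancel₀ hτ⟩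
  have h2 : φ (Polynomial.reflect E.natDegree E) * (τ⁻¹) ^ E.natDegree = φi E :=
    Polynomial.eval₂_reflect_mul_pow i₀ τ⁻¹ E.natDegree E le_rfl
  have hrefl2 : φ (Polynomial.reflect E.natDegree E) = φi E * τ ^ E.natDegree := by
    rw [← h2, mul_assoc, ← mul_pow, inv_mul_cancel₀ hτ, one_pow, mul_one]
  apply hinj
  have hφX : φ X = τ := by simp [hφ]
  simp only [_root_.map_mul, map_pow, hφX]
  rw [hkey, hrefl2]
  ring

lemma polyDisc_charpoly (B : Matrix (Fin n) (Fin n) ℤ) :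
    polyDisc ℚ ((B.map (Int.cast : ℤ → ℚ)).charpoly)
      = (-1 : AlgebraicClosure ℚ) ^ (n * (n - 1) / 2)
        * dd (B.map (Int.cast : ℤ → AlgebraicClosure ℚ)) := by
  have h1 : (B.map (Int.cast : ℤ → ℚ)).map (algebraMap ℚ (AlgebraicClosure ℚ))
      = B.map (Int.cast : ℤ → AlgebraicClosure ℚ) := by
    ext i j
    simp [Matrix.map_apply]
  have hdeg : (B.map (Int.cast : ℤ → ℚ)).charpoly.natDegree = n := by
    rw [Matrix.charpoly_natDegree_eq_dim, Fintype.card_fin]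
  unfold polyDisc
  rw [hdeg, Polynomial.aroots_def, ← Matrix.charpoly_map]
  erw [h1]
  rw [← det_aeval_eq]
  rfl

end Stmt13

open Stmt13 Matrix in
theorem stmt13 (n : ℕ) (A : Matrix (Fin n) (Fin n) ℤ) :
    ∃ D : ℤ[X],
      (∀ t : ℤ, ((D.eval t : ℤ) : AlgebraicClosure ℚ) =
        polyDisc ℚ ((t • Matrix.diagonal (fun i : Fin n => ((i : ℕ) + 1 : ℤ)) + A).map
          (Int.cast : ℤ → ℚ)).charpoly) ∧
      D.natDegree = n ^ 2 - n ∧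
      D.leadingCoeff =
        ∏ q ∈ Finset.univ.filter (fun q : Fin n × Fin n => q.1 < q.2),
          ((q.2 : ℤ) - (q.1 : ℤ)) ^ 2 ∧
      D.leadingCoeff ≠ 0 ∧
      ∀ p : ℕ, p.Prime → n < p → D.map (Int.castRingHom (ZMod p)) ≠ 0 := by
  classical
  have hd2 : n * (n - 1) = n ^ 2 - n := nat_sq n
  set v : Fin n → ℤ := fun i : Fin n => ((i : ℕ) + 1 : ℤ) with hv
  have hvinj : Function.Injective v := by
    intro a b hab
    simp only [hv] at hab
    exact Fin.ext (by omega)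
  set Sd : Matrix (Fin n) (Fin n) ℤ := Matrix.diagonal v with hSd
  set M : Matrix (Fin n) (Fin n) ℤ[X] :=
    (X : ℤ[X]) • Sd.map Polynomial.C + A.map Polynomial.C with hM
  set N₀ : Matrix (Fin n) (Fin n) ℤ[X] :=
    Sd.map Polynomial.C + (X : ℤ[X]) • A.map Polynomial.C with hN₀
  set d : ℕ := n * (n - 1) with hd
  set ε : ℤ := (-1) ^ (n * (n - 1) / 2) with hε
  set E : ℤ[X] := dd N₀ with hE
  set P : ℤ := ∏ q ∈ Finset.univ.filter (fun q : Fin n × Fin n => q.1 < q.2),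
      ((q.2 : ℤ) - (q.1 : ℤ)) ^ 2 with hP
  have hrefl : (X : ℤ[X]) ^ E.natDegree * dd M
      = X ^ d * Polynomial.reflect E.natDegree E := key_reflect Sd A
  have hcoeff_hi : ∀ k, d < k → (dd M).coeff k = 0 := by
    intro k hk
    have h5 : ((X : ℤ[X]) ^ E.natDegree * dd M).coeff (k + E.natDegree) = (dd M).coeff k :=
      Polynomial.coeff_X_pow_mul _ _ _
    rw [hrefl] at h5
    rw [← h5, show k + E.natDegree = (k + E.natDegree - d) + d by omega,
      Polynomial.coeff_X_pow_mul, Polynomial.coeff_reflect]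
    apply Polynomial.coeff_eq_zero_of_natDegree_lt
    have h7 : ¬ (k + E.natDegree - d ≤ E.natDegree) := by omega
    simp only [Polynomial.revAt, Function.Embedding.coeFn_mk, Polynomial.revAtFun, if_neg h7]
    show E.natDegree < (if k + E.natDegree - d ≤ E.natDegree then E.natDegree - (k + E.natDegree - d) else k + E.natDegree - d)
    rw [if_neg h7]
    omega
  have hcoeff_d : (dd M).coeff d = E.coeff 0 := by
    have h5 : ((X : ℤ[X]) ^ E.natDegree * dd M).coeff (d + E.natDegree) = (dd M).coeff d :=
      Polynomial.coeff_X_pow_mul _ _ _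
    rw [hrefl] at h5
    rw [← h5, show d + E.natDegree = E.natDegree + d by omega, Polynomial.coeff_X_pow_mul,
      Polynomial.coeff_reflect, Polynomial.revAt_le le_rfl, Nat.sub_self]
  have hE0 : E.coeff 0 = ε * P := by
    rw [Polynomial.coeff_zero_eq_eval_zero]
    have h1 : Polynomial.eval 0 E = (Polynomial.evalRingHom 0) E := rfl
    have h2 : N₀.map (Polynomial.evalRingHom (0 : ℤ)) = Sd := by
      ext i j
      simp [hN₀, Matrix.map_apply, Matrix.add_apply, Matrix.smul_apply]
    rw [h1, hE, dd_map, h2, hSd, dd_diagonal v hvinj, prod_pairs v, hε, hP]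
    congr 1
    apply Finset.prod_congr rfl
    intro q _
    simp only [hv]
    ring
  have hεε : ε * ε = 1 := by
    rw [hε, ← pow_add, ← two_mul, pow_mul]
    simp
  have hcoeffD_d : (Polynomial.C ε * dd M).coeff d = P := by
    rw [Polynomial.coeff_C_mul, hcoeff_d, hE0, ← mul_assoc, hεε, one_mul]
  have hP0 : P ≠ 0 := by
    rw [hP]
    apply Finset.prod_ne_zero_iff.mpr
    intro q hq
    simp only [Finset.mem_filter, Finset.mem_univ, true_and] at hq
    have h1 : (q.1 : ℕ) < (q.2 : ℕ) := hq
    apply pow_ne_zero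
    have h2 : ((q.1 : ℤ)) < ((q.2 : ℤ)) := by exact_mod_cast h1
    exact sub_ne_zero.mpr (ne_of_gt h2)
  have hdegD : (Polynomial.C ε * dd M).natDegree = d := by
    apply le_antisymm
    · apply Polynomial.natDegree_le_iff_coeff_eq_zero.mpr
      intro N hN
      rw [Polynomial.coeff_C_mul, hcoeff_hi N hN, mul_zero]
    · apply Polynomial.le_natDegree_of_ne_zero
      rw [hcoeffD_d]
      exact hP0
  have hlead : (Polynomial.C ε * dd M).leadingCoeff = P := by
    rw [Polynomial.leadingCoeff, hdegD, hcoeffD_d]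
  refine ⟨Polynomial.C ε * dd M, ?_, ?_, ?_, ?_, ?_⟩
  · -- evaluation identity
    intro t
    have hpd := polyDisc_charpoly (t • Sd + A)
    rw [hpd]
    have hlhs : ((Polynomial.eval t (Polynomial.C ε * dd M) : ℤ) : AlgebraicClosure ℚ)
        = Polynomial.eval₂ (Int.castRingHom (AlgebraicClosure ℚ))
            ((Int.castRingHom (AlgebraicClosure ℚ)) t) (Polynomial.C ε * dd M) :=
      (Polynomial.eval₂_at_apply (Int.castRingHom (AlgebraicClosure ℚ)) t).symm
    have hMt : M.map (Polynomial.eval₂RingHom (Int.castRingHom (AlgebraicClosure ℚ))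
          ((Int.castRingHom (AlgebraicClosure ℚ)) t))
        = (t • Sd + A).map (Int.cast : ℤ → AlgebraicClosure ℚ) := by
      ext i j
      simp only [hM, Matrix.map_apply, Matrix.add_apply, Matrix.smul_apply, smul_eq_mul,
        Polynomial.coe_eval₂RingHom, Polynomial.eval₂_add, Polynomial.eval₂_mul,
        Polynomial.eval₂_X, Polynomial.eval₂_C, Int.coe_castRingHom]
      push_cast
      ring
    rw [hlhs]
    have hφt : Polynomial.eval₂ (Int.castRingHom (AlgebraicClosure ℚ))
          ((Int.castRingHom (AlgebraicClosure ℚ)) t) (Polynomial.C ε * dd M)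
        = ((ε : ℤ) : AlgebraicClosure ℚ)
            * dd ((t • Sd + A).map (Int.cast : ℤ → AlgebraicClosure ℚ)) := by
      rw [show Polynomial.eval₂ (Int.castRingHom (AlgebraicClosure ℚ))
            ((Int.castRingHom (AlgebraicClosure ℚ)) t) (Polynomial.C ε * dd M)
          = (Polynomial.eval₂RingHom (Int.castRingHom (AlgebraicClosure ℚ))
              ((Int.castRingHom (AlgebraicClosure ℚ)) t)) (Polynomial.C ε * dd M) from rfl,
        _root_.map_mul, dd_map, hMt]
      congr 1
      simp
    rw [hφt]
    congr 1
    rw [hε]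
    push_cast
    ring
  · rw [hdegD, hd]; exact nat_sq n
  · rw [hlead, hP]
  · rw [hlead]; exact hP0
  · intro p hp hnp hzero
    haveI : Fact p.Prime := ⟨hp⟩
    have h8 : ((Polynomial.C ε * dd M).map (Int.castRingHom (ZMod p))).coeff d = 0 := by
      rw [hzero]; simp
    rw [Polynomial.coeff_map, hcoeffD_d, hP, map_prod] at h8
    obtain ⟨q, hq, hq0⟩ := Finset.prod_eq_zero_iff.mp h8
    simp only [Finset.mem_filter, Finset.mem_univ, true_and] at hq
    rw [map_pow] at hq0
    have h9 : ((Int.castRingHom (ZMod p)) ((q.2 : ℤ) - (q.1 : ℤ))) = 0 :=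
      pow_eq_zero_iff (n := 2) (by norm_num) |>.mp hq0
    have h10 : (p : ℤ) ∣ ((q.2 : ℤ) - (q.1 : ℤ)) := by
      rw [← ZMod.intCast_zmod_eq_zero_iff_dvd]
      exact_mod_cast h9
    have h11 : (q.1 : ℕ) < (q.2 : ℕ) := hq
    have h12 : ((q.1 : ℤ)) < ((q.2 : ℤ)) := by exact_mod_cast h11
    have h13 : (p : ℤ) ≤ (q.2 : ℤ) - (q.1 : ℤ) := Int.le_of_dvd (by omega) h10
    have h14 : (q.2 : ℕ) < n := q.2.isLt
    have h15 : ((q.2 : ℤ)) < (n : ℤ) := by exact_mod_cast h14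
    have h16 : (n : ℤ) < (p : ℤ) := by exact_mod_cast hnp
    omega
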